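/- Let X be an infinite-dimensional real Banach space and let D and E be countably incomplete ultrafilters. Then the ultrapowers (X)_D and (X)_E are ω-equivalent: every separable closed subspace of (X)_D is isomorphic to a closed subspace of (X)_E, and vice versa. -/

import Mathlib

open Cardinal Filter
open scoped ENNReal

universe u v

noncomputable section

instance : Fact ((1 : ℝ≥0∞) ≤ ∞) := ⟨le_top⟩

/-- `dim X`: the least cardinality of a subset of `X` whose closed linear span is all of `X`. -/
def spanDim (X : Type*) [SeminormedAddCommGroup X] [NormedSpace ℝ X] : Cardinal :=
  sInf {c : Cardinal | ∃ s : Set X,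
    closure (Submodule.span ℝ s : Set X) = Set.univ ∧ Cardinal.mk s = c}

/-- The subspace `N_D` of `ℓ_∞(I, X)` of families whose norms tend to `0` along the
ultrafilter `D`. -/
def ultraNull {I : Type*} (D : Ultrafilter I) (X : Type*)
    [NormedAddCommGroup X] [NormedSpace ℝ X] :
    Submodule ℝ (lp (fun _ : I => X) ∞) where
  carrier := {f | Tendsto (fun i => ‖f i‖) (D : Filter I) (nhds 0)}
  zero_mem' := by
    simp only [Set.mem_setOf_eq, lp.coeFn_zero, Pi.zero_apply, norm_zero]
    exact tendsto_const_nhds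
  add_mem' := by
    intro f g hf hg
    have h : Tendsto (fun i => ‖f i‖ + ‖g i‖) (D : Filter I) (nhds 0) := by
      simpa using hf.add hg
    exact squeeze_zero (fun i => norm_nonneg _) (fun i => norm_add_le _ _) h
  smul_mem' := by
    intro c f hf
    have h : Tendsto (fun i => ‖c‖ * ‖f i‖) (D : Filter I) (nhds 0) := by
      simpa using hf.const_mul ‖c‖
    refine squeeze_zero (fun i => norm_nonneg _) (fun i => ?_) h
    simp [norm_smul]

/-- The ultrapower `(X)_D` of a Banach space `X` by an ultrafilter `D`: the quotient of
`ℓ_∞(I, X)` by the subspace of families with `lim_D ‖x_i‖ = 0`. -/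
abbrev Ultrapower {I : Type*} (D : Ultrafilter I) (X : Type*)
    [NormedAddCommGroup X] [NormedSpace ℝ X] : Type _ :=
  (lp (fun _ : I => X) ∞) ⧸ ultraNull D X

/-- The canonical (diagonal) embedding `d_X : X → (X)_D`. -/
def canonicalEmbedding {I : Type*} (D : Ultrafilter I) (X : Type*)
    [NormedAddCommGroup X] [NormedSpace ℝ X] : X → Ultrapower D X := fun x =>
  Submodule.Quotient.mk
    (⟨fun _ => x, memℓp_infty ⟨‖x‖, by rintro - ⟨i, rfl⟩; simp⟩⟩ : lp (fun _ : I => X) ∞)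

/-- An ultrafilter `D` is `κ`-complete if every subfamily `G ⊆ D` with `card G < κ`
satisfies `⋂₀ G ∈ D`. -/
def UltrafilterComplete {I : Type u} (D : Ultrafilter I) (κ : Cardinal.{v}) : Prop :=
  ∀ G : Set (Set I), (∀ A ∈ G, A ∈ D) →
    Cardinal.lift.{v} (Cardinal.mk G) < Cardinal.lift.{u} κ → ⋂₀ G ∈ D

/-- An ultrafilter is countably incomplete if it is not `ω₁`-complete. -/
def CountablyIncomplete {I : Type*} (D : Ultrafilter I) : Prop :=
  ¬ UltrafilterComplete D (Cardinal.aleph.{0} 1)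

/-- `X` is `ω`-representable in `Y`: every separable closed linear subspace of `X` is
isomorphic (linearly homeomorphic) to a closed linear subspace of `Y`. -/
def OmegaRepresentable (X : Type*) [SeminormedAddCommGroup X] [NormedSpace ℝ X]
    (Y : Type*) [SeminormedAddCommGroup Y] [NormedSpace ℝ Y] : Prop :=
  ∀ E : Submodule ℝ X, IsClosed (E : Set X) → TopologicalSpace.SeparableSpace E →
    ∃ F : Submodule ℝ Y, IsClosed (F : Set Y) ∧ Nonempty (E ≃L[ℝ] F)

section Aux

set_option linter.unusedSectionVars false

variable {X : Type*} [NormedAddCommGroup X] [NormedSpace ℝ X]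
variable {I : Type*} (D : Ultrafilter I)

lemma mem_ultraNull_iff {x : lp (fun _ : I => X) ∞} :
    x ∈ ultraNull D X ↔ Tendsto (fun i => ‖x i‖) (D : Filter I) (nhds 0) := Iff.rfl

lemma exists_ulim (x : lp (fun _ : I => X) ∞) :
    ∃ L, 0 ≤ L ∧ Tendsto (fun i => ‖x i‖) (D : Filter I) (nhds L) := by
  have hmem : Set.Icc (0 : ℝ) ‖x‖ ∈ Ultrafilter.map (fun i => ‖x i‖) D :=
    Filter.mem_map.2 (Filter.univ_mem' fun i =>
      ⟨norm_nonneg _, lp.norm_apply_le_norm ENNReal.top_ne_zero x i⟩)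
  obtain ⟨L, hLmem, hle⟩ := (isCompact_Icc (a := (0:ℝ)) (b := ‖x‖)).ultrafilter_le_nhds
      (Ultrafilter.map (fun i => ‖x i‖) D) (Filter.le_principal_iff.2 hmem)
  refine ⟨L, hLmem.1, ?_⟩
  rwa [Ultrafilter.coe_map] at hle

lemma norm_mk_ultra {x : lp (fun _ : I => X) ∞} {L : ℝ}
    (h : Tendsto (fun i => ‖x i‖) (D : Filter I) (nhds L)) :
    ‖(Submodule.Quotient.mk x : Ultrapower D X)‖ = L := by
  have hL0 : (0:ℝ) ≤ L := ge_of_tendsto' h fun i => norm_nonneg _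
  refine le_antisymm ?_ ?_
  · refine le_of_forall_pos_le_add fun ε hε => ?_
    classical
    have hA : ∀ᶠ i in (D : Filter I), ‖x i‖ < L + ε :=
      h.eventually_lt_const (lt_add_of_pos_right L hε)
    set A := {i | ‖x i‖ < L + ε} with hAdef
    have hgmem : Memℓp (fun i => if i ∈ A then (0 : X) else x i) (∞ : ℝ≥0∞) := by
      apply memℓp_infty
      refine ⟨‖x‖, ?_⟩
      rintro - ⟨i, rfl⟩
      by_cases hi : i ∈ A <;>
        simp [hi, norm_nonneg, lp.norm_apply_le_norm ENNReal.top_ne_zero x i]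
    set g : lp (fun _ : I => X) ∞ := ⟨fun i => if i ∈ A then (0 : X) else x i, hgmem⟩
      with hgdef
    have hgcoe : ∀ i, g i = if i ∈ A then (0 : X) else x i := fun i => rfl
    have hgnull : g ∈ ultraNull D X := by
      rw [mem_ultraNull_iff]
      have hev : ∀ᶠ i in (D : Filter I), (0:ℝ) = ‖g i‖ := by
        filter_upwards [hA] with i hi
        simp [hgcoe, hi, hAdef]
      exact Tendsto.congr' hev
        (tendsto_const_nhds : Tendsto (fun _ : I => (0:ℝ)) (D : Filter I) (nhds 0))
    have hmk : (Submodule.Quotient.mk x : Ultrapower D X) = Submodule.Quotient.mk (x - g) := by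
      rw [eq_comm, Submodule.Quotient.eq]
      simpa using hgnull
    rw [hmk]
    refine (Submodule.Quotient.norm_mk_le _ _).trans ?_
    refine lp.norm_le_of_forall_le (by linarith) fun i => ?_
    have hxi : (x - g) i = x i - g i := by rw [lp.coeFn_sub]; rfl
    rw [hxi, hgcoe]
    by_cases hi : i ∈ A
    · simpa [hi] using le_of_lt (hi : ‖x i‖ < L + ε)
    · simp only [hi, if_false, sub_self, norm_zero]
      linarith
  · by_contra hcon
    push_neg at hcon
    obtain ⟨m, hm, hmlt⟩ := Submodule.Quotient.norm_mk_lt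
      (Submodule.Quotient.mk x : Ultrapower D X) (sub_pos.2 hcon)
    have hmlt' : ‖m‖ < L := by linarith
    have hnull : Tendsto (fun i => ‖(m - x) i‖) (D : Filter I) (nhds 0) := by
      have h1 : m - x ∈ ultraNull D X := (Submodule.Quotient.eq _).1 hm
      exact (mem_ultraNull_iff D).1 h1
    have hL : L ≤ ‖m‖ := by
      refine le_of_forall_pos_le_add fun ε hε => ?_
      have h1 : ∀ᶠ i in (D : Filter I), L - ε/2 < ‖x i‖ :=
        h.eventually_const_lt (by linarith)
      have h2 : ∀ᶠ i in (D : Filter I), ‖(m - x) i‖ < ε/2 :=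
        hnull.eventually_lt_const (by linarith)
      obtain ⟨i, hi1, hi2⟩ := (h1.and h2).exists
      have e0 : (m - x) i = m i - x i := by rw [lp.coeFn_sub]; rfl
      have e1 : ‖x i‖ ≤ ‖m i‖ + ‖(m - x) i‖ := by
        rw [e0]
        calc ‖x i‖ = ‖m i - (m i - x i)‖ := by congr 1; abel
        _ ≤ ‖m i‖ + ‖m i - x i‖ := norm_sub_le _ _
      have e2 : ‖m i‖ ≤ ‖m‖ := lp.norm_apply_le_norm ENNReal.top_ne_zero m i
      linarith
    linarith

lemma ultraNull_isClosed : IsClosed ((ultraNull D X : Set (lp (fun _ : I => X) ∞))) := by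
  have hset : (ultraNull D X : Set (lp (fun _ : I => X) ∞)) =
      {x | ‖(Submodule.Quotient.mk x : Ultrapower D X)‖ = 0} := by
    ext x
    constructor
    · intro hx
      exact norm_mk_ultra D ((mem_ultraNull_iff D).1 hx)
    · intro hx
      obtain ⟨L, hL0, hL⟩ := exists_ulim D x
      have hmk := norm_mk_ultra D hL
      have hLL : L = 0 := by rw [← hmk]; exact hx
      exact (mem_ultraNull_iff D).2 (hLL ▸ hL)
  rw [hset]
  have hlip : LipschitzWith 1
      (fun x : lp (fun _ : I => X) ∞ => (Submodule.Quotient.mk x : Ultrapower D X)) := by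
    apply LipschitzWith.of_dist_le_mul
    intro a b
    simp only [NNReal.coe_one, one_mul]
    rw [dist_eq_norm, dist_eq_norm, ← Submodule.Quotient.mk_sub]
    exact Submodule.Quotient.norm_mk_le _ _
  exact isClosed_eq (continuous_norm.comp hlip.continuous) continuous_const

lemma exists_chain {J : Type*} (D' : Ultrafilter J) (h : CountablyIncomplete D') :
    ∃ K : ℕ → Set J, (∀ n, K n ∈ D') ∧ (∀ m n, m ≤ n → K n ⊆ K m) ∧ ⋂ n, K n = ∅ := by
  rw [CountablyIncomplete, UltrafilterComplete] at h
  push_neg at h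
  obtain ⟨G, hG, hcard, hnG⟩ := h
  have hcount : G.Countable := by
    rw [Cardinal.countable_iff_lt_aleph_one]
    rw [Cardinal.lift_uzero, Cardinal.lift_aleph, Ordinal.lift_one] at hcard
    exact hcard
  have hGne : G.Nonempty := by
    rcases G.eq_empty_or_nonempty with rfl | hne
    · rw [Set.sInter_empty] at hnG
      exact absurd Filter.univ_mem hnG
    · exact hne
  obtain ⟨g, hg⟩ := hcount.exists_eq_range hGne
  classical
  refine ⟨fun n => (⋂ m ∈ Finset.range (n+1), g m) ∩ (⋂₀ G)ᶜ, ?_, ?_, ?_⟩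
  · intro n
    refine Filter.inter_mem ((Filter.biInter_finset_mem _).2 fun m _ => ?_)
      ((Ultrafilter.compl_mem_iff_notMem).2 hnG)
    exact hG _ (by rw [hg]; exact ⟨m, rfl⟩)
  · intro m n hmn
    refine Set.inter_subset_inter ?_ subset_rfl
    intro i hi
    simp only [Set.mem_iInter] at hi ⊢
    intro k hk
    exact hi k (Finset.mem_range.2 (lt_of_lt_of_le (Finset.mem_range.1 hk) (by omega)))
  · ext j
    simp only [Set.mem_iInter, Set.mem_empty_iff_false, iff_false]
    intro hj
    have h1 : j ∈ ⋂₀ G := by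
      rw [hg]
      rintro A ⟨m, rfl⟩
      have h2 := (hj m).1
      simp only [Set.mem_iInter] at h2
      exact h2 m (Finset.mem_range.2 (by omega))
    exact (hj 0).2 h1

end Aux

set_option maxHeartbeats 2000000 in
set_option synthInstance.maxHeartbeats 1000000 in
lemma omega_rep {X : Type*} [NormedAddCommGroup X] [NormedSpace ℝ X] [CompleteSpace X]
    {I J : Type*} (D₁ : Ultrafilter I) (D₂ : Ultrafilter J)
    (hD₂ : CountablyIncomplete D₂) :
    OmegaRepresentable (Ultrapower D₁ X) (Ultrapower D₂ X) := by
  classical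
  intro E hEc hEsep
  haveI := hEsep
  haveI : Nonempty E := ⟨0⟩
  haveI hcl₁ : IsClosed ((ultraNull D₁ X : Set (lp (fun _ : I => X) ∞))) := ultraNull_isClosed D₁
  haveI hcl₂ : IsClosed ((ultraNull D₂ X : Set (lp (fun _ : J => X) ∞))) := ultraNull_isClosed D₂
  haveI : CompleteSpace E := hEc.completeSpace_coe
  haveI hT2 : T2Space (Ultrapower D₂ X) := by
    letI := Submodule.Quotient.normedAddCommGroup (ultraNull D₂ X)
    infer_instance
  -- a dense sequence in `E` whose zeroth term is `0`
  obtain ⟨e0, he0⟩ : ∃ e0 : ℕ → E, DenseRange e0 :=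
    ⟨TopologicalSpace.denseSeq E, TopologicalSpace.denseRange_denseSeq E⟩
  let e : ℕ → E := fun k => match k with | 0 => 0 | Nat.succ k => e0 k
  have he : DenseRange e := by
    refine he0.mono ?_
    rintro - ⟨k, rfl⟩
    exact ⟨k + 1, rfl⟩
  -- lifts of the dense sequence to `ℓ_∞(I, X)`
  choose f0 hf0 using fun k =>
    Submodule.Quotient.mk_surjective (ultraNull D₁ X) ((e0 k : Ultrapower D₁ X))
  let f : ℕ → lp (fun _ : I => X) ∞ := fun k => match k with | 0 => 0 | Nat.succ k => f0 k
  have hf : ∀ k, (Submodule.Quotient.mk (f k) : Ultrapower D₁ X) = (↑(e k) : Ultrapower D₁ X) := by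
    intro k
    cases k with
    | zero => simp [f, e]
    | succ k => exact hf0 k
  -- the countable family of constraints
  let q : ℕ → ℕ × ℕ × ℕ := fun n => Denumerable.ofNat (ℕ × ℕ × ℕ) n
  let g : ℕ → lp (fun _ : I => X) ∞ := fun n => f (q n).1 - f (q n).2.1 - f (q n).2.2
  choose L hL0 hL using fun n => exists_ulim D₁ (g n)
  -- good index sets in `D₁`
  let A : ℕ → Set I := fun n =>
    ⋂ m ∈ Finset.range (n+1), {i | |‖g m i‖ - L m| < 1/(n+1)}
  have hA : ∀ n, A n ∈ (D₁ : Filter I) := by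
    intro n
    refine (Filter.biInter_finset_mem _).2 fun m _ => ?_
    have h1 : ∀ᶠ i in (D₁ : Filter I), dist ‖g m i‖ (L m) < 1/(n+1) :=
      Metric.tendsto_nhds.1 (hL m) _ (by positivity)
    refine h1.mono fun i hi => ?_
    simpa [Real.dist_eq] using hi
  -- a chain in `D₂` with empty intersection, and the level function
  obtain ⟨K, hK, hKanti, hKempty⟩ := exists_chain D₂ hD₂
  have hex : ∀ j, ∃ n, j ∉ K n := by
    intro j
    by_contra hc
    push_neg at hc
    have hj : j ∈ ⋂ n, K n := Set.mem_iInter.2 hc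
    rw [hKempty] at hj
    exact hj
  let lev : J → ℕ := fun j => Nat.find (hex j)
  have hlev : Tendsto lev (D₂ : Filter J) atTop := by
    rw [Filter.tendsto_atTop]
    intro N
    filter_upwards [hK N] with j hj
    by_contra hcon
    push_neg at hcon
    exact Nat.find_spec (hex j) (hKanti _ _ (le_of_lt hcon) hj)
  -- the index selection
  have hAne : ∀ n, (A n).Nonempty := fun n => Filter.nonempty_of_mem (hA n)
  let φ : J → I := fun j => (hAne (lev j)).some
  have hφ : ∀ j, φ j ∈ A (lev j) := fun j => (hAne (lev j)).some_mem
  have hgφ : ∀ n, Tendsto (fun j => ‖g n (φ j)‖) (D₂ : Filter J) (nhds (L n)) := by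
    intro n
    rw [Metric.tendsto_nhds]
    intro ε hε
    obtain ⟨M, hM⟩ := exists_nat_gt (1/ε)
    have hMpos : (0:ℝ) < M := lt_trans (by positivity) hM
    have hN : ∀ᶠ j in (D₂ : Filter J), max n M ≤ lev j := hlev.eventually (eventually_ge_atTop _)
    refine hN.mono fun j hj => ?_
    have hmem := hφ j
    simp only [A, Set.mem_iInter, Set.mem_setOf_eq] at hmem
    have h2 := hmem n (Finset.mem_range.2 (by
      have := le_trans (le_max_left n M) hj
      omega))
    have hMlev : (M:ℝ) ≤ (lev j : ℝ) + 1 := by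
      have : M ≤ lev j + 1 := by
        have := le_trans (le_max_right n M) hj
        omega
      exact_mod_cast this
    have h3 : (1:ℝ)/((lev j : ℝ)+1) ≤ 1/(M:ℝ) := one_div_le_one_div_of_le hMpos hMlev
    have h4 : (1:ℝ)/(M:ℝ) < ε := by
      rw [div_lt_iff₀ hMpos]
      rw [div_lt_iff₀ hε] at hM
      linarith [mul_comm (M:ℝ) ε]
    rw [Real.dist_eq]
    calc |‖g n (φ j)‖ - L n| < 1/((lev j : ℝ)+1) := by exact_mod_cast h2
    _ ≤ 1/(M:ℝ) := h3
    _ < ε := h4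
  -- the composition operator and the induced map into the ultrapower
  have hmemΨ : ∀ x : lp (fun _ : I => X) ∞, Memℓp (fun j => x (φ j)) (∞:ℝ≥0∞) := by
    intro x
    apply memℓp_infty
    refine ⟨‖x‖, ?_⟩
    rintro - ⟨j, rfl⟩
    exact lp.norm_apply_le_norm ENNReal.top_ne_zero x (φ j)
  let Ψ : lp (fun _ : I => X) ∞ →ₗ[ℝ] lp (fun _ : J => X) ∞ :=
    { toFun := fun x => ⟨fun j => x (φ j), hmemΨ x⟩
      map_add' := by
        intro a b
        apply lp.ext
        funext j
        simp [lp.coeFn_add]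
        rfl
      map_smul' := by
        intro c a
        apply lp.ext
        funext j
        simp [lp.coeFn_smul] }
  let u : lp (fun _ : I => X) ∞ →ₗ[ℝ] Ultrapower D₂ X := (ultraNull D₂ X).mkQ.comp Ψ
  have hu : ∀ n, ‖u (g n)‖ = L n := by
    intro n
    exact norm_mk_ultra D₂ (hgφ n)
  have hg1 : ∀ n, ‖(Submodule.Quotient.mk (g n) : Ultrapower D₁ X)‖ = L n := fun n =>
    norm_mk_ultra D₁ (hL n)
  -- the key norm identity
  have key : ∀ a b c : ℕ, ‖u (f a) - u (f b) - u (f c)‖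
      = ‖(↑(e a) : Ultrapower D₁ X) - (↑(e b) : Ultrapower D₁ X)
          - (↑(e c) : Ultrapower D₁ X)‖ := by
    intro a b c
    have hq : q (Encodable.encode ((a, b, c) : ℕ × ℕ × ℕ)) = (a, b, c) := by
      simp [q, Denumerable.ofNat_encode]
    have hgn : g (Encodable.encode ((a, b, c) : ℕ × ℕ × ℕ)) = f a - f b - f c := by
      simp only [g, hq]
    calc ‖u (f a) - u (f b) - u (f c)‖ = ‖u (f a - f b - f c)‖ := by rw [map_sub, map_sub]
    _ = L (Encodable.encode ((a, b, c) : ℕ × ℕ × ℕ)) := by rw [← hgn]; exact hu _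
    _ = ‖(Submodule.Quotient.mk (f a - f b - f c) : Ultrapower D₁ X)‖ := by
        rw [← hgn]; exact (hg1 _).symm
    _ = ‖(Submodule.Quotient.mk (f a) : Ultrapower D₁ X) - Submodule.Quotient.mk (f b)
          - Submodule.Quotient.mk (f c)‖ := by rw [Submodule.Quotient.mk_sub, Submodule.Quotient.mk_sub]
    _ = _ := by rw [hf, hf, hf]
  have key2 : ∀ a b : ℕ, ‖u (f a) - u (f b)‖
      = ‖(↑(e a) : Ultrapower D₁ X) - (↑(e b) : Ultrapower D₁ X)‖ := by
    intro a b
    have h0 := key a b 0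
    have hf00 : f 0 = 0 := rfl
    have he00 : e 0 = (0 : E) := rfl
    rw [hf00, he00, map_zero, sub_zero, ZeroMemClass.coe_zero, sub_zero] at h0
    exact h0
  have key2d : ∀ a b : ℕ, dist (u (f a)) (u (f b)) = dist (e a) (e b) := by
    intro a b
    rw [dist_eq_norm, key2, Subtype.dist_eq, dist_eq_norm]
  -- the approximating sequences
  have happ : ∀ (z : E) (m : ℕ), ∃ k, dist z (e k) < 1/(m+1) := fun z m =>
    Metric.denseRange_iff.1 he z _ (by positivity)
  choose κ hκ using happ
  have heκ : ∀ z : E, Tendsto (fun m => e (κ z m)) atTop (nhds z) := by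
    intro z
    rw [tendsto_iff_dist_tendsto_zero]
    refine squeeze_zero (fun m => dist_nonneg) (fun m => le_of_lt ?_)
      tendsto_one_div_add_atTop_nhds_zero_nat
    rw [dist_comm]
    exact hκ z m
  have hcoe : ∀ z : E, Tendsto (fun m => (↑(e (κ z m)) : Ultrapower D₁ X)) atTop
      (nhds (↑z : Ultrapower D₁ X)) :=
    fun z => (continuous_subtype_val.tendsto z).comp (heκ z)
  let seq : E → ℕ → Ultrapower D₂ X := fun z m => u (f (κ z m))
  have hdist2 : ∀ z z' m, dist (seq z m) (seq z' m) = dist (e (κ z m)) (e (κ z' m)) :=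
    fun z z' m => key2d _ _
  have hcau : ∀ z, CauchySeq (seq z) := by
    intro z
    refine cauchySeq_of_le_tendsto_0 (fun N => 2/(N+1)) (fun n m N hn hm => ?_) ?_
    · have hd : dist (seq z n) (seq z m) = dist (e (κ z n)) (e (κ z m)) := key2d _ _
      rw [hd]
      have h1 : dist (e (κ z n)) (e (κ z m)) ≤ dist (e (κ z n)) z + dist z (e (κ z m)) :=
        dist_triangle _ _ _
      have h2 : dist (e (κ z n)) z < 1/(n+1) := by rw [dist_comm]; exact hκ z n
      have h3 : dist z (e (κ z m)) < 1/(m+1) := hκ z m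
      have h4 : (1:ℝ)/(n+1) ≤ 1/(N+1) := by
        apply one_div_le_one_div_of_le (by positivity)
        exact_mod_cast Nat.succ_le_succ hn
      have h5 : (1:ℝ)/(m+1) ≤ 1/(N+1) := by
        apply one_div_le_one_div_of_le (by positivity)
        exact_mod_cast Nat.succ_le_succ hm
      have h6 : (2:ℝ)/(N+1) = 1/(N+1) + 1/(N+1) := by ring
      linarith
    · have h7 : Tendsto (fun N : ℕ => (2:ℝ) * (1/(N+1))) atTop (nhds ((2:ℝ) * 0)) :=
        tendsto_one_div_add_atTop_nhds_zero_nat.const_mul 2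
      simpa [mul_one_div, div_eq_mul_inv] using h7
  have hlimseq := fun z => cauchySeq_tendsto_of_complete (hcau z)
  choose v hv using hlimseq
  -- additivity of `v`
  have hadd : ∀ z z' : E, v (z + z') = v z + v z' := by
    intro z z'
    have hlim1 : Tendsto
        (fun m => u (f (κ (z + z') m)) - u (f (κ z m)) - u (f (κ z' m))) atTop
        (nhds (v (z + z') - v z - v z')) := ((hv (z + z')).sub (hv z)).sub (hv z')
    have hlim0 : Tendsto
        (fun m => u (f (κ (z + z') m)) - u (f (κ z m)) - u (f (κ z' m))) atTop (nhds 0) := by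
      rw [tendsto_zero_iff_norm_tendsto_zero]
      have hrw : (fun m => ‖u (f (κ (z + z') m)) - u (f (κ z m)) - u (f (κ z' m))‖)
          = fun m => ‖(↑(e (κ (z + z') m)) : Ultrapower D₁ X)
              - (↑(e (κ z m)) : Ultrapower D₁ X)
              - (↑(e (κ z' m)) : Ultrapower D₁ X)‖ :=
        funext fun m => key _ _ _
      rw [hrw]
      have h1 : Tendsto (fun m => (↑(e (κ (z + z') m)) : Ultrapower D₁ X)
          - (↑(e (κ z m)) : Ultrapower D₁ X)
          - (↑(e (κ z' m)) : Ultrapower D₁ X)) atTop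
          (nhds ((↑(z + z') : Ultrapower D₁ X) - (↑z : Ultrapower D₁ X)
            - (↑z' : Ultrapower D₁ X))) :=
        ((hcoe (z + z')).sub (hcoe z)).sub (hcoe z')
      have h2 : (↑(z + z') : Ultrapower D₁ X) - (↑z : Ultrapower D₁ X)
          - (↑z' : Ultrapower D₁ X) = 0 := by
        push_cast
        abel
      rw [h2] at h1
      simpa using h1.norm
    have h3 := tendsto_nhds_unique hlim1 hlim0
    have h4 : v (z + z') - v z - v z' = 0 := h3
    rw [sub_sub, sub_eq_zero] at h4
    rw [h4]
  -- `v` is isometric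
  have hisod : ∀ z z' : E, dist (v z) (v z') = dist z z' := by
    intro z z'
    have h1 : Tendsto (fun m => dist (seq z m) (seq z' m)) atTop
        (nhds (dist (v z) (v z'))) := (hv z).dist (hv z')
    have h2 : Tendsto (fun m => dist (seq z m) (seq z' m)) atTop (nhds (dist z z')) := by
      have hrw : (fun m => dist (seq z m) (seq z' m))
          = fun m => dist (e (κ z m)) (e (κ z' m)) := funext fun m => hdist2 _ _ _
      rw [hrw]
      exact (heκ z).dist (heκ z')
    exact tendsto_nhds_unique h1 h2
  -- the continuous linear embedding
  let vhom : E →+ Ultrapower D₂ X := AddMonoidHom.mk' v hadd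
  have hviso : Isometry v := Isometry.of_dist_eq hisod
  have hvhomcont : Continuous (⇑vhom) := hviso.continuous
  let vL : E →L[ℝ] Ultrapower D₂ X := vhom.toRealLinearMap hvhomcont
  have hvL : ∀ z, vL z = v z := fun z =>
    congrFun (AddMonoidHom.coe_toRealLinearMap vhom hvhomcont) z
  let F : Submodule ℝ (Ultrapower D₂ X) := LinearMap.range (vL : E →ₗ[ℝ] Ultrapower D₂ X)
  have hrange : (F : Set (Ultrapower D₂ X)) = Set.range v := by
    ext y
    constructor
    · rintro ⟨x, rfl⟩
      exact ⟨x, (hvL x).symm⟩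
    · rintro ⟨x, rfl⟩
      exact ⟨x, hvL x⟩
  have hFc : IsClosed (F : Set (Ultrapower D₂ X)) := by
    rw [hrange]
    exact hviso.isClosedEmbedding.isClosed_range
  have hinj : Function.Injective (vL : E →ₗ[ℝ] Ultrapower D₂ X) := by
    intro a b hab
    apply hviso.injective
    rw [← hvL, ← hvL]
    exact hab
  let le : E ≃ₗ[ℝ] F := LinearEquiv.ofInjective (vL : E →ₗ[ℝ] Ultrapower D₂ X) hinj
  have hle : ∀ x : E, ((le x : F) : Ultrapower D₂ X) = vL x := fun x =>
    LinearEquiv.ofInjective_apply _ _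
  have hv0 : v 0 = 0 := vhom.map_zero
  have hnorm_v : ∀ z : E, ‖v z‖ = ‖z‖ := fun z => hviso.norm_map_of_map_zero hv0 z
  refine ⟨F, hFc, ⟨⟨le, ?_, ?_⟩⟩⟩
  · -- continuity of `le`
    refine continuous_induced_rng.2 ?_
    show Continuous fun x : E => ((le x : F) : Ultrapower D₂ X)
    have hcomp : (fun x : E => ((le x : F) : Ultrapower D₂ X)) = fun x : E => vL x :=
      funext fun x => hle x
    rw [hcomp]
    exact vL.continuous
  · -- continuity of `le.symm`
    have hb : ∀ y : F, ‖((le.symm y : E))‖ ≤ 1 * ‖y‖ := by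
      intro y
      have h1 : vL (le.symm y) = (y : Ultrapower D₂ X) := by
        have h2 := le.apply_symm_apply y
        have h3 := congrArg (Subtype.val (p := fun z => z ∈ F)) h2
        rw [← hle (le.symm y)]
        exact h3
      rw [one_mul]
      have hy : ‖(le.symm y : E)‖ = ‖y‖ := by
        calc ‖(le.symm y : E)‖ = ‖v (le.symm y)‖ := (hnorm_v _).symm
        _ = ‖vL (le.symm y)‖ := by rw [hvL]
        _ = ‖(y : Ultrapower D₂ X)‖ := by rw [h1]
        _ = ‖y‖ := (Submodule.coe_norm y).symm
      exact le_of_eq hy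
    exact AddMonoidHomClass.continuous_of_bound le.symm 1 hb

/-- For an infinite-dimensional Banach space `X` and countably incomplete ultrafilters
`D₁`, `D₂`, the ultrapowers `(X)_{D₁}` and `(X)_{D₂}` are `ω`-equivalent. -/
theorem ultrapowers_omega_equivalent
    (X : Type*) [NormedAddCommGroup X] [NormedSpace ℝ X] [CompleteSpace X]
    (hinf : ¬ FiniteDimensional ℝ X)
    {I J : Type*} (D₁ : Ultrafilter I) (D₂ : Ultrafilter J)
    (hD₁ : CountablyIncomplete D₁) (hD₂ : CountablyIncomplete D₂) :
    OmegaRepresentable (Ultrapower D₁ X) (Ultrapower D₂ X) ∧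
      OmegaRepresentable (Ultrapower D₂ X) (Ultrapower D₁ X) :=
  ⟨omega_rep D₁ D₂ hD₂, omega_rep D₂ D₁ hD₁⟩
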